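/- Let A ∈ M_n with numerical range W(A) contained in a sector S_α for some α ∈ [0, π/2), and let f : [0,∞) → [0,∞) be a concave function. Then for every unitarily invariant norm ‖·‖, one has ‖f(Re A)‖ ≤ ‖f(|A|)‖. -/

import Mathlib

open Matrix Set ComplexOrder

variable {m : Type*}

/-- The modulus `|X| = (XᴴX)^{1/2}` of a matrix. -/
noncomputable def matAbs [Fintype m] [DecidableEq m] (X : Matrix m m ℂ) : Matrix m m ℂ :=
  (Matrix.posSemidef_conjTranspose_mul_self X).1.eigenvectorUnitary.1 *
    diagonal ((↑) ∘ Real.sqrt ∘ (Matrix.posSemidef_conjTranspose_mul_self X).1.eigenvalues) *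
    (star (Matrix.posSemidef_conjTranspose_mul_self X).1.eigenvectorUnitary : Matrix m m ℂ)

theorem matAbs_posSemidef [Fintype m] [DecidableEq m] (X : Matrix m m ℂ) :
    (matAbs X).PosSemidef := by
  unfold matAbs
  have hD : (diagonal ((↑) ∘ Real.sqrt ∘
      (Matrix.posSemidef_conjTranspose_mul_self X).1.eigenvalues) : Matrix m m ℂ).PosSemidef := by
    refine Matrix.posSemidef_diagonal_iff.mpr fun i => ?_
    simp only [Function.comp_apply]
    exact_mod_cast Real.sqrt_nonneg _
  simpa [Matrix.star_eq_conjTranspose] using hD.mul_mul_conjTranspose_same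
    ((Matrix.posSemidef_conjTranspose_mul_self X).1.eigenvectorUnitary : Matrix m m ℂ)

/-- Functional calculus: apply `f : ℝ → ℝ` to a Hermitian matrix via its spectral
decomposition (junk value `0` for non-Hermitian input). -/
noncomputable def matFun [Fintype m] [DecidableEq m] (f : ℝ → ℝ) (X : Matrix m m ℂ) :
    Matrix m m ℂ :=
  if h : X.IsHermitian then
    (h.eigenvectorUnitary : Matrix m m ℂ) *
      Matrix.diagonal (fun i => (f (h.eigenvalues i) : ℂ)) *
      star (h.eigenvectorUnitary : Matrix m m ℂ)
  else 0

/-- Real part `Re A = (A + Aᴴ)/2`. -/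
noncomputable def reM (A : Matrix m m ℂ) : Matrix m m ℂ := (1/2 : ℂ) • (A + Aᴴ)

/-- Imaginary part `Im A = (A - Aᴴ)/(2i)`. -/
noncomputable def imM (A : Matrix m m ℂ) : Matrix m m ℂ := (1/(2*Complex.I)) • (A - Aᴴ)

/-- Numerical range `W(A) = {x* A x : x*x = 1}`. -/
def numRange [Fintype m] (A : Matrix m m ℂ) : Set ℂ :=
  {z | ∃ x : m → ℂ, star x ⬝ᵥ x = 1 ∧ z = star x ⬝ᵥ A.mulVec x}

/-- The sector `S_α = {z : Re z ≥ 0, |Im z| ≤ (Re z) tan α}`. -/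
def sector (α : ℝ) : Set ℂ := {z | 0 ≤ z.re ∧ |z.im| ≤ z.re * Real.tan α}

lemma herm_diag {n : ℕ} {M : Matrix (Fin n) (Fin n) ℂ} (h : M.IsHermitian) :
    star (h.eigenvectorUnitary : Matrix (Fin n) (Fin n) ℂ) * M
      * (h.eigenvectorUnitary : Matrix (Fin n) (Fin n) ℂ)
      = Matrix.diagonal (fun i => ((h.eigenvalues i : ℝ) : ℂ)) := by
  have hs := h.spectral_theorem
  rw [Unitary.conjStarAlgAut_apply] at hs
  rw [congrArg (fun X => star (h.eigenvectorUnitary : Matrix (Fin n) (Fin n) ℂ) * X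
    * (h.eigenvectorUnitary : Matrix (Fin n) (Fin n) ℂ)) hs]
  simp only [Matrix.mul_assoc, Unitary.coe_star_mul_self, Matrix.mul_one]
  rw [← Matrix.mul_assoc, Unitary.coe_star_mul_self, Matrix.one_mul]
  rfl

lemma matAbs_mul_self {n : ℕ} (A : Matrix (Fin n) (Fin n) ℂ) :
    matAbs A * matAbs A = Aᴴ * A := by
  have hP := Matrix.posSemidef_conjTranspose_mul_self A
  have hs := hP.1.spectral_theorem
  rw [Unitary.conjStarAlgAut_apply] at hs
  unfold matAbs
  conv_rhs => rw [hs]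
  simp only [Matrix.mul_assoc]
  rw [← Matrix.mul_assoc (star (hP.1.eigenvectorUnitary : Matrix (Fin n) (Fin n) ℂ)),
    Unitary.coe_star_mul_self, Matrix.one_mul, ← Matrix.mul_assoc (Matrix.diagonal _),
    diagonal_mul_diagonal]
  congr 3
  funext i
  simp only [Function.comp_apply]
  rw [← Complex.ofReal_mul, Real.mul_self_sqrt (hP.eigenvalues_nonneg i)]
  rfl


lemma concave_nonneg_mono (f : ℝ → ℝ) (hf : ConcaveOn ℝ (Set.Ici 0) f)
    (hf0 : ∀ x : ℝ, 0 ≤ x → 0 ≤ f x) {a b : ℝ} (ha : 0 ≤ a) (hab : a ≤ b) : f a ≤ f b := by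
  rcases eq_or_lt_of_le hab with rfl | hlt
  · exact le_rfl
  by_contra h
  push_neg at h
  obtain ⟨T, hT⟩ : ∃ T : ℝ, T = f a / (f a - f b) + 1 := ⟨_, rfl⟩
  have hfa : 0 ≤ f a := hf0 a ha
  have hδ : 0 < f a - f b := by linarith
  have hT1 : 1 ≤ T := by
    have : 0 ≤ f a / (f a - f b) := div_nonneg hfa hδ.le
    linarith [hT]
  have hT0 : 0 < T := by linarith
  obtain ⟨x, hx⟩ : ∃ x : ℝ, x = a + T * (b - a) := ⟨_, rfl⟩
  have hx0 : 0 ≤ x := by nlinarith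
  have hcomb : (1 - 1/T) • a + (1/T) • x = b := by
    simp only [smul_eq_mul, hx]
    field_simp
    ring
  have key := hf.2 (Set.mem_Ici.mpr ha) (Set.mem_Ici.mpr hx0)
    (by rw [sub_nonneg, div_le_one hT0]; linarith : (0:ℝ) ≤ 1 - 1/T)
    (by positivity : (0:ℝ) ≤ 1/T) (by ring)
  rw [hcomb] at key
  simp only [smul_eq_mul] at key
  have fx0 : 0 ≤ f x := hf0 x hx0
  have hTδ : T * (f a - f b) = f a + (f a - f b) := by
    rw [hT]; field_simp
  have key2 : T * ((1 - 1/T) * f a + 1/T * f x) ≤ T * f b :=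
    mul_le_mul_of_nonneg_left key hT0.le
  have expand : T * ((1 - 1/T) * f a + 1/T * f x) = T * f a - f a + f x := by
    field_simp
  nlinarith [key2, expand, hTδ, fx0]


variable {n : ℕ} (N : Matrix (Fin n) (Fin n) ℂ → ℝ)

lemma N_conj_unitary
    (hui : ∀ X, ∀ U ∈ Matrix.unitaryGroup (Fin n) ℂ, ∀ V ∈ Matrix.unitaryGroup (Fin n) ℂ,
      N (U * X * V) = N X)
    (X : Matrix (Fin n) (Fin n) ℂ) (U : Matrix (Fin n) (Fin n) ℂ)
    (hU : U ∈ Matrix.unitaryGroup (Fin n) ℂ) :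
    N (U * X * star U) = N X :=
  hui X U hU (star U) (Unitary.star_mem hU)

lemma N_diag_perm
    (hui : ∀ X, ∀ U ∈ Matrix.unitaryGroup (Fin n) ℂ, ∀ V ∈ Matrix.unitaryGroup (Fin n) ℂ,
      N (U * X * V) = N X)
    (σ : Equiv.Perm (Fin n)) (d : Fin n → ℂ) :
    N (Matrix.diagonal (d ∘ σ)) = N (Matrix.diagonal d) := by
  set P : Matrix (Fin n) (Fin n) ℂ := (1 : Matrix (Fin n) (Fin n) ℂ).submatrix σ id with hP
  have hPs : star P = (1 : Matrix (Fin n) (Fin n) ℂ).submatrix id σ := by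
    ext i j
    simp [hP, Matrix.conjTranspose_apply, Matrix.one_apply, eq_comm]
  have hPU : P ∈ Matrix.unitaryGroup (Fin n) ℂ := by
    rw [Matrix.mem_unitaryGroup_iff, hPs]
    ext i j
    simp [hP, Matrix.mul_apply, Matrix.one_apply, Finset.sum_ite_eq, eq_comm]
  have hconj : P * Matrix.diagonal d * star P = Matrix.diagonal (d ∘ σ) := by
    rw [hPs]
    ext i j
    simp only [hP, Matrix.mul_apply, Matrix.diagonal_apply, Matrix.one_apply,
      Matrix.submatrix_apply, id_eq, Function.comp_apply]
    simp [Finset.sum_ite_eq]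
    split_ifs with h <;> simp [h]
  rw [← hconj]
  exact N_conj_unitary N hui _ P hPU

lemma N_diag_mono
    (hadd : ∀ X Y, N (X + Y) ≤ N X + N Y)
    (hsmul : ∀ (c : ℂ) X, N (c • X) = ‖c‖ * N X)
    (hui : ∀ X, ∀ U ∈ Matrix.unitaryGroup (Fin n) ℂ, ∀ V ∈ Matrix.unitaryGroup (Fin n) ℂ,
      N (U * X * V) = N X)
    (c d : Fin n → ℝ) (hc : ∀ i, 0 ≤ c i) (hcd : ∀ i, c i ≤ d i) :
    N (Matrix.diagonal (fun i => (c i : ℂ))) ≤ N (Matrix.diagonal (fun i => (d i : ℂ))) := by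
  set t : Fin n → ℝ := fun i => if d i = 0 then 0 else c i / d i with ht
  have hd : ∀ i, 0 ≤ d i := fun i => (hc i).trans (hcd i)
  have ht0 : ∀ i, 0 ≤ t i := by
    intro i
    by_cases h : d i = 0 <;> simp [ht, h]
    exact div_nonneg (hc i) (hd i)
  have ht1 : ∀ i, t i ≤ 1 := by
    intro i
    by_cases h : d i = 0 <;> simp [ht, h]
    exact div_le_one_of_le₀ (hcd i) (hd i)
  have htc : ∀ i, t i * d i = c i := by
    intro i
    by_cases h : d i = 0
    · have hc0 : c i = 0 := le_antisymm (h ▸ hcd i) (hc i)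
      simp [ht, h, hc0]
    · simp only [ht, if_neg h]
      field_simp
  set w : Fin n → ℂ := fun i => ⟨t i, Real.sqrt (1 - t i ^ 2)⟩ with hw
  have hwn : ∀ i, (starRingEnd ℂ) (w i) * w i = 1 := by
    intro i
    rw [mul_comm, Complex.mul_conj]
    have h1 : (0:ℝ) ≤ 1 - t i ^ 2 := by nlinarith [ht0 i, ht1 i]
    have h2 : Complex.normSq (w i) = 1 := by
      have h3 := Real.sq_sqrt h1
      simp only [Complex.normSq_mk, hw]
      nlinarith [h3]
    rw [h2]; simp
  have hWU : Matrix.diagonal w ∈ Matrix.unitaryGroup (Fin n) ℂ := by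
    rw [Matrix.mem_unitaryGroup_iff']
    rw [Matrix.star_eq_conjTranspose, Matrix.diagonal_conjTranspose, Matrix.diagonal_mul_diagonal]
    convert Matrix.diagonal_one
    rename_i i
    simpa [Complex.star_def] using hwn i
  have hWU' : Matrix.diagonal (star w) ∈ Matrix.unitaryGroup (Fin n) ℂ := by
    rw [Matrix.mem_unitaryGroup_iff]
    rw [Matrix.star_eq_conjTranspose, Matrix.diagonal_conjTranspose, Matrix.diagonal_mul_diagonal]
    convert Matrix.diagonal_one
    rename_i i
    simp only [Pi.mul_apply, Pi.star_apply, star_star]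
    rw [mul_comm]
    simpa [Complex.star_def, mul_comm] using hwn i
  have hiden : (1/2 : ℂ) • (Matrix.diagonal w * Matrix.diagonal (fun i => (d i : ℂ)))
      + (1/2 : ℂ) • (Matrix.diagonal (star w) * Matrix.diagonal (fun i => (d i : ℂ)))
      = Matrix.diagonal (fun i => (c i : ℂ)) := by
    ext i j
    by_cases h : i = j
    · subst h
      simp only [Matrix.add_apply, Matrix.smul_apply, Matrix.diagonal_mul_diagonal,
        Matrix.diagonal_apply_eq, Pi.mul_apply, Pi.star_apply, smul_eq_mul]
      rw [show ((c i : ℂ)) = ((t i * d i : ℝ) : ℂ) by rw [htc i]]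
      push_cast
      apply Complex.ext <;> simp [hw, Complex.star_def] <;> ring
    · simp [Matrix.diagonal_mul_diagonal, Matrix.diagonal_apply_ne _ h, h]
  calc N (Matrix.diagonal (fun i => (c i : ℂ)))
      = N ((1/2 : ℂ) • (Matrix.diagonal w * Matrix.diagonal (fun i => (d i : ℂ)))
        + (1/2 : ℂ) • (Matrix.diagonal (star w) * Matrix.diagonal (fun i => (d i : ℂ)))) := by
        rw [hiden]
    _ ≤ N ((1/2 : ℂ) • (Matrix.diagonal w * Matrix.diagonal (fun i => (d i : ℂ))))
        + N ((1/2 : ℂ) • (Matrix.diagonal (star w) * Matrix.diagonal (fun i => (d i : ℂ)))) :=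
        hadd _ _
    _ = (1/2) * N (Matrix.diagonal w * Matrix.diagonal (fun i => (d i : ℂ)))
        + (1/2) * N (Matrix.diagonal (star w) * Matrix.diagonal (fun i => (d i : ℂ))) := by
        rw [hsmul, hsmul]; norm_num
    _ = N (Matrix.diagonal (fun i => (d i : ℂ))) := by
        have h1 := hui (Matrix.diagonal (fun i => (d i : ℂ))) _ hWU 1 (one_mem _)
        have h2 := hui (Matrix.diagonal (fun i => (d i : ℂ))) _ hWU' 1 (one_mem _)
        rw [mul_one] at h1 h2
        rw [h1, h2]; ring


lemma reM_isHermitian [Fintype m] (A : Matrix m m ℂ) : (reM A).IsHermitian := by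
  unfold reM
  unfold Matrix.IsHermitian
  rw [Matrix.conjTranspose_smul, Matrix.conjTranspose_add, Matrix.conjTranspose_conjTranspose]
  rw [add_comm]
  congr 1
  simp

lemma dot_conjTranspose_self [Fintype m] (A : Matrix m m ℂ) (x : m → ℂ) :
    star x ⬝ᵥ Aᴴ *ᵥ x = star (star x ⬝ᵥ A *ᵥ x) := by
  rw [Matrix.dotProduct_mulVec, ← Matrix.star_mulVec]
  rw [← star_star x, Matrix.star_dotProduct_star, star_star]

lemma dot_reM [Fintype m] (A : Matrix m m ℂ) (x : m → ℂ) :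
    star x ⬝ᵥ (reM A) *ᵥ x = (((star x ⬝ᵥ A *ᵥ x).re : ℝ) : ℂ) := by
  unfold reM
  rw [Matrix.smul_mulVec, dotProduct_smul, Matrix.add_mulVec,
    dotProduct_add, dot_conjTranspose_self]
  set z := star x ⬝ᵥ A *ᵥ x
  rw [Complex.star_def]
  apply Complex.ext <;> simp [Complex.add_re, Complex.conj_re] <;> ring

lemma dot_smul_quad [Fintype m] (M : Matrix m m ℂ) (x : m → ℂ) (c : ℂ) :
    star (c • x) ⬝ᵥ M *ᵥ (c • x) = (star c * c) * (star x ⬝ᵥ M *ᵥ x) := by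
  rw [star_smul, Matrix.mulVec_smul, smul_dotProduct, dotProduct_smul]
  simp [smul_eq_mul, mul_assoc]

lemma reM_posSemidef {k : ℕ} (A : Matrix (Fin k) (Fin k) ℂ) (α : ℝ)
    (hA : numRange A ⊆ sector α) : (reM A).PosSemidef := by
  refine Matrix.PosSemidef.of_dotProduct_mulVec_nonneg (reM_isHermitian A) fun x => ?_
  by_cases hx : x = 0
  · simp [hx]
  · set s : ℝ := ∑ i, Complex.normSq (x i) with hs
    have hs0 : 0 < s := by
      have : ∃ i, x i ≠ 0 := by
        by_contra h
        push_neg at h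
        exact hx (funext h)
      obtain ⟨i, hi⟩ := this
      apply Finset.sum_pos' (fun j _ => Complex.normSq_nonneg _)
      exact ⟨i, Finset.mem_univ i, Complex.normSq_pos.mpr hi⟩
    have hxx : star x ⬝ᵥ x = (s : ℂ) := by
      simp only [dotProduct, Pi.star_apply, Complex.star_def, hs]
      push_cast
      congr 1
      funext i
      rw [mul_comm, Complex.mul_conj]
    set c : ℂ := ((Real.sqrt s : ℝ) : ℂ)⁻¹ with hc
    set y : Fin k → ℂ := c • x with hy
    have hsqrt : Real.sqrt s ≠ 0 := by
      rw [Real.sqrt_ne_zero hs0.le]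
      exact hs0.ne'
    have hcc : star c * c = ((s⁻¹ : ℝ) : ℂ) := by
      rw [hc, star_inv₀, Complex.star_def, Complex.conj_ofReal, ← mul_inv,
        ← Complex.ofReal_mul, Real.mul_self_sqrt hs0.le, Complex.ofReal_inv]
    have hyy : star y ⬝ᵥ y = 1 := by
      rw [hy, star_smul, smul_dotProduct, dotProduct_smul, hxx]
      simp only [smul_eq_mul, ← mul_assoc, hcc]
      rw [← Complex.ofReal_mul, inv_mul_cancel₀ hs0.ne']
      simp
    have hz : star y ⬝ᵥ A *ᵥ y ∈ sector α := hA ⟨y, hyy, rfl⟩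
    have hzy : (0:ℝ) ≤ (star y ⬝ᵥ A *ᵥ y).re := hz.1
    have hxy : x = ((Real.sqrt s : ℝ) : ℂ) • y := by
      rw [hy, smul_smul, hc, mul_inv_cancel₀ (by exact_mod_cast hsqrt), one_smul]
    rw [hxy, dot_smul_quad, dot_reM]
    have hss : star ((Real.sqrt s : ℝ) : ℂ) * ((Real.sqrt s : ℝ) : ℂ) = (s : ℂ) := by
      rw [Complex.star_def, Complex.conj_ofReal, ← Complex.ofReal_mul,
        Real.mul_self_sqrt hs0.le]
    rw [hss, ← Complex.ofReal_mul]
    rw [Complex.zero_le_real]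
    positivity


lemma quad_conj {n : ℕ} (M U : Matrix (Fin n) (Fin n) ℂ)
    (hU : U ∈ Matrix.unitaryGroup (Fin n) ℂ) (x : Fin n → ℂ) :
    star x ⬝ᵥ M *ᵥ x
      = star (star U *ᵥ x) ⬝ᵥ (star U * M * U) *ᵥ (star U *ᵥ x) := by
  have h1 : U * star U = 1 := Matrix.mem_unitaryGroup_iff.mp hU
  rw [Matrix.star_mulVec, Matrix.mulVec_mulVec]
  have h2 : star U * M * U * star U = star U * M := by
    rw [Matrix.mul_assoc, h1, Matrix.mul_one]
  have h3 : (star U)ᴴ = U := by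
    rw [Matrix.star_eq_conjTranspose, Matrix.conjTranspose_conjTranspose]
  have h4 : U * (star U * M) = M := by
    rw [← Matrix.mul_assoc, h1, Matrix.one_mul]
  rw [h2, h3, Matrix.dotProduct_mulVec, Matrix.dotProduct_mulVec, Matrix.vecMul_vecMul, h4]

lemma diag_quad {n : ℕ} (v : Fin n → ℝ) (y : Fin n → ℂ) :
    star y ⬝ᵥ (Matrix.diagonal (fun i => (v i : ℂ))) *ᵥ y
      = ((∑ i, v i * Complex.normSq (y i) : ℝ) : ℂ) := by
  simp only [dotProduct, Matrix.mulVec_diagonal, Pi.star_apply]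
  push_cast
  congr 1
  funext i
  rw [Complex.star_def]
  have : (starRingEnd ℂ) (y i) * (↑(v i) * y i) = ↑(v i) * (y i * (starRingEnd ℂ) (y i)) := by
    ring
  rw [this, Complex.mul_conj]

lemma dot_star_self {n : ℕ} (v : Fin n → ℂ) :
    star v ⬝ᵥ v = ((∑ i, Complex.normSq (v i) : ℝ) : ℂ) := by
  simp only [dotProduct, Pi.star_apply, Complex.star_def]
  push_cast
  congr 1
  funext i
  rw [mul_comm, Complex.mul_conj]

lemma sum_normSq_pos {n : ℕ} (v : Fin n → ℂ) (hv : v ≠ 0) :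
    0 < ∑ i, Complex.normSq (v i) := by
  have : ∃ i, v i ≠ 0 := by
    by_contra h
    push_neg at h
    exact hv (funext h)
  obtain ⟨i, hi⟩ := this
  apply Finset.sum_pos' (fun j _ => Complex.normSq_nonneg _)
  exact ⟨i, Finset.mem_univ i, Complex.normSq_pos.mpr hi⟩

lemma fan_hoffman {n : ℕ} (A : Matrix (Fin n) (Fin n) ℂ)
    (hH : (reM A).IsHermitian) (hB : (matAbs A).IsHermitian)
    (hreM : ∀ x : Fin n → ℂ, star x ⬝ᵥ (reM A) *ᵥ x = (((star x ⬝ᵥ A *ᵥ x).re : ℝ) : ℂ))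
    (σ τ : Equiv.Perm (Fin n))
    (hσ : Monotone (hH.eigenvalues ∘ σ)) (hτ : Monotone (hB.eigenvalues ∘ τ))
    (hμ0 : ∀ i, 0 ≤ hB.eigenvalues i)
    (k : Fin n) : hH.eigenvalues (σ k) ≤ hB.eigenvalues (τ k) := by
  classical
  set lam := hH.eigenvalues with hlamdef
  set mu := hB.eigenvalues with hmudef
  by_cases hlam : lam (σ k) ≤ 0
  · exact hlam.trans (hμ0 _)
  push_neg at hlam
  set U : Matrix (Fin n) (Fin n) ℂ := (hH.eigenvectorUnitary : Matrix (Fin n) (Fin n) ℂ) with hUdef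
  set V : Matrix (Fin n) (Fin n) ℂ := (hB.eigenvectorUnitary : Matrix (Fin n) (Fin n) ℂ) with hVdef
  have hUu : U ∈ Matrix.unitaryGroup (Fin n) ℂ := (hH.eigenvectorUnitary).2
  have hVu : V ∈ Matrix.unitaryGroup (Fin n) ℂ := (hB.eigenvectorUnitary).2
  -- existence of a nonzero vector in the intersection
  set L : (Fin n → ℂ) →ₗ[ℂ] ({ i : Fin n // i < k } → ℂ) × ({ i : Fin n // k < i } → ℂ) :=
    LinearMap.prod
      ((LinearMap.funLeft ℂ ℂ (fun i : { i : Fin n // i < k } => σ i.1)).comp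
        (Matrix.mulVecLin (star U)))
      ((LinearMap.funLeft ℂ ℂ (fun i : { i : Fin n // k < i } => τ i.1)).comp
        (Matrix.mulVecLin (star V))) with hLdef
  have hdim : ∃ x : Fin n → ℂ, x ≠ 0 ∧ L x = 0 := by
    by_contra hcon
    push_neg at hcon
    have hker : LinearMap.ker L = ⊥ := by
      rw [LinearMap.ker_eq_bot']
      intro m hm
      by_contra hm0
      exact hcon m hm0 hm
    have hinj : Function.Injective L := LinearMap.ker_eq_bot.mp hker
    have hle := LinearMap.finrank_le_finrank_of_injective hinj
    have hcard1 : Fintype.card { i : Fin n // i < k } = (k : ℕ) := by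
      rw [Fintype.card_subtype]
      rw [show Finset.filter (fun i => i < k) Finset.univ = Finset.Iio k by ext i; simp]
      exact Fin.card_Iio k
    have hcard2 : Fintype.card { i : Fin n // k < i } = n - 1 - (k : ℕ) := by
      rw [Fintype.card_subtype]
      rw [show Finset.filter (fun i => k < i) Finset.univ = Finset.Ioi k by ext i; simp]
      exact Fin.card_Ioi k
    rw [Module.finrank_fin_fun, Module.finrank_prod, Module.finrank_pi, Module.finrank_pi,
      hcard1, hcard2] at hle
    have := k.isLt
    omega
  obtain ⟨x, hx0, hLx⟩ := hdim
  set y : Fin n → ℂ := star U *ᵥ x with hydef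
  set z : Fin n → ℂ := star V *ᵥ x with hzdef
  have hy0 : ∀ i : Fin n, i < k → y (σ i) = 0 := by
    intro i hi
    have := congrFun (congrArg Prod.fst hLx) ⟨i, hi⟩
    simpa [hLdef, hydef] using this
  have hz0 : ∀ i : Fin n, k < i → z (τ i) = 0 := by
    intro i hi
    have := congrFun (congrArg Prod.snd hLx) ⟨i, hi⟩
    simpa [hLdef, hzdef] using this
  -- spectral identities
  have hDH : star U * (reM A) * U = Matrix.diagonal (fun i => ((lam i : ℝ) : ℂ)) :=
    herm_diag hH
  have hqH : star x ⬝ᵥ (reM A) *ᵥ x = ((∑ i, lam i * Complex.normSq (y i) : ℝ) : ℂ) := by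
    rw [quad_conj (reM A) U hUu x, hDH, ← hydef, diag_quad]
  have hr : (star x ⬝ᵥ A *ᵥ x).re = ∑ i, lam i * Complex.normSq (y i) := by
    have h := (hreM x).symm.trans hqH
    exact_mod_cast h
  have hVmid : ∀ Z : Matrix (Fin n) (Fin n) ℂ, V * (star V * Z) = Z := by
    intro Z
    rw [← Matrix.mul_assoc, Matrix.mem_unitaryGroup_iff.mp hVu, Matrix.one_mul]
  have hBB : matAbs A * matAbs A = Aᴴ * A :=
    matAbs_mul_self A
  have hDB : star V * matAbs A * V = Matrix.diagonal (fun i => ((mu i : ℝ) : ℂ)) :=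
    herm_diag hB
  have h2m : (star V * matAbs A * V) * (star V * matAbs A * V) = star V * (Aᴴ * A) * V := by
    rw [← hBB]
    simp only [Matrix.mul_assoc]
    rw [hVmid]
  have hDB2 : star V * (Aᴴ * A) * V = Matrix.diagonal (fun i => ((mu i ^ 2 : ℝ) : ℂ)) := by
    rw [← h2m, hDB, Matrix.diagonal_mul_diagonal]
    congr 1
    funext i
    push_cast
    ring
  have hqB : star x ⬝ᵥ (Aᴴ * A) *ᵥ x = ((∑ i, mu i ^ 2 * Complex.normSq (z i) : ℝ) : ℂ) := by
    rw [quad_conj (Aᴴ * A) V hVu x, hDB2, ← hzdef, diag_quad]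
  have hqB' : star x ⬝ᵥ (Aᴴ * A) *ᵥ x = ((∑ i, Complex.normSq ((A *ᵥ x) i) : ℝ) : ℂ) := by
    rw [show (Aᴴ * A) *ᵥ x = Aᴴ *ᵥ (A *ᵥ x) from (Matrix.mulVec_mulVec x Aᴴ A).symm]
    rw [Matrix.dotProduct_mulVec, ← Matrix.star_mulVec]
    exact dot_star_self _
  have hq : ∑ i, mu i ^ 2 * Complex.normSq (z i) = ∑ i, Complex.normSq ((A *ᵥ x) i) := by
    have h := hqB.symm.trans hqB'
    exact_mod_cast h
  -- norm identities
  have hcy : ∑ i, Complex.normSq (y i) = ∑ i, Complex.normSq (x i) := by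
    have h1 := quad_conj 1 U hUu x
    rw [Matrix.mul_one, Matrix.mem_unitaryGroup_iff'.mp hUu, Matrix.one_mulVec,
      Matrix.one_mulVec, ← hydef, dot_star_self, dot_star_self] at h1
    exact_mod_cast h1.symm
  have hcz : ∑ i, Complex.normSq (z i) = ∑ i, Complex.normSq (x i) := by
    have h1 := quad_conj 1 V hVu x
    rw [Matrix.mul_one, Matrix.mem_unitaryGroup_iff'.mp hVu, Matrix.one_mulVec,
      Matrix.one_mulVec, ← hzdef, dot_star_self, dot_star_self] at h1
    exact_mod_cast h1.symm
  set c : ℝ := ∑ i, Complex.normSq (x i) with hcdef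
  have hc0 : 0 < c := sum_normSq_pos x hx0
  have h1 : lam (σ k) * c ≤ (star x ⬝ᵥ A *ᵥ x).re := by
    rw [hr, ← hcy]
    rw [← Equiv.sum_comp σ (fun i => lam i * Complex.normSq (y i)),
      ← Equiv.sum_comp σ (fun i => Complex.normSq (y i)), Finset.mul_sum]
    apply Finset.sum_le_sum
    intro i _
    rcases lt_or_ge i k with h | h
    · simp [hy0 i h]
    · exact mul_le_mul_of_nonneg_right (hσ h) (Complex.normSq_nonneg _)
  have h2 : (∑ i, Complex.normSq ((A *ᵥ x) i)) ≤ mu (τ k) ^ 2 * c := by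
    rw [← hq, ← hcz]
    rw [← Equiv.sum_comp τ (fun i => mu i ^ 2 * Complex.normSq (z i)),
      ← Equiv.sum_comp τ (fun i => Complex.normSq (z i)), Finset.mul_sum]
    apply Finset.sum_le_sum
    intro i _
    rcases le_or_gt i k with h | h
    · exact mul_le_mul_of_nonneg_right
        (pow_le_pow_left₀ (hμ0 _) (hτ h) 2) (Complex.normSq_nonneg _)
    · simp [hz0 i h]
  have h3 : (star x ⬝ᵥ A *ᵥ x).re ≤ ∑ i, ‖x i‖ * ‖(A *ᵥ x) i‖ := by
    refine (Complex.re_le_norm _).trans ?_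
    unfold dotProduct
    refine (norm_sum_le _ _).trans ?_
    apply le_of_eq
    apply Finset.sum_congr rfl
    intro i _
    rw [norm_mul]
    congr 1
    simp only [Pi.star_apply, Complex.star_def]
    exact Complex.norm_conj _
  have h4 : (∑ i, ‖x i‖ * ‖(A *ᵥ x) i‖) ^ 2
      ≤ c * (∑ i, Complex.normSq ((A *ᵥ x) i)) := by
    have h := Finset.sum_mul_sq_le_sq_mul_sq Finset.univ
      (fun i => ‖x i‖) (fun i => ‖(A *ᵥ x) i‖)
    simpa [Complex.sq_norm, ← hcdef] using h
  have hr0 : 0 ≤ (star x ⬝ᵥ A *ᵥ x).re := le_trans (by positivity) h1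
  have h5 : (lam (σ k) * c) ^ 2 ≤ ((star x ⬝ᵥ A *ᵥ x).re) ^ 2 :=
    pow_le_pow_left₀ (by positivity) h1 2
  have h6 : ((star x ⬝ᵥ A *ᵥ x).re) ^ 2
      ≤ (∑ i, ‖x i‖ * ‖(A *ᵥ x) i‖) ^ 2 :=
    pow_le_pow_left₀ hr0 h3 2
  have hA1 : (lam (σ k) * c) ^ 2 ≤ c * (∑ i, Complex.normSq ((A *ᵥ x) i)) :=
    le_trans h5 (le_trans h6 h4)
  have hA2 : c * (∑ i, Complex.normSq ((A *ᵥ x) i)) ≤ c * (mu (τ k) ^ 2 * c) :=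
    mul_le_mul_of_nonneg_left h2 hc0.le
  have h7 : lam (σ k) ^ 2 * c ^ 2 ≤ mu (τ k) ^ 2 * c ^ 2 := by
    calc lam (σ k) ^ 2 * c ^ 2 = (lam (σ k) * c) ^ 2 := by ring
      _ ≤ c * (mu (τ k) ^ 2 * c) := le_trans hA1 hA2
      _ = mu (τ k) ^ 2 * c ^ 2 := by ring
  have hc2 : 0 < c ^ 2 := by positivity
  have h9 : lam (σ k) ^ 2 ≤ mu (τ k) ^ 2 := (mul_le_mul_iff_of_pos_right hc2).mp h7
  exact (pow_le_pow_iff_left₀ hlam.le (hμ0 (τ k)) two_ne_zero).mp h9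

theorem norm_matFun_re_le_abs {n : ℕ} (A : Matrix (Fin n) (Fin n) ℂ) (α : ℝ)
    (hα₀ : 0 ≤ α) (hα₁ : α < Real.pi / 2) (hA : numRange A ⊆ sector α)
    (f : ℝ → ℝ) (hf : ConcaveOn ℝ (Set.Ici 0) f) (hf0 : ∀ x : ℝ, 0 ≤ x → 0 ≤ f x)
    (N : Matrix (Fin n) (Fin n) ℂ → ℝ)
    (hadd : ∀ X Y, N (X + Y) ≤ N X + N Y)
    (hsmul : ∀ (c : ℂ) X, N (c • X) = ‖c‖ * N X)
    (hui : ∀ X, ∀ U ∈ Matrix.unitaryGroup (Fin n) ℂ, ∀ V ∈ Matrix.unitaryGroup (Fin n) ℂ,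
      N (U * X * V) = N X) :
    N (matFun f (reM A)) ≤ N (matFun f (matAbs A)) := by
  have hRe : (reM A).PosSemidef := reM_posSemidef A α hA
  have hH : (reM A).IsHermitian := hRe.1
  have hBP : (matAbs A).PosSemidef := matAbs_posSemidef A
  have hB : (matAbs A).IsHermitian := hBP.1
  set lam := hH.eigenvalues with hlam
  set mu := hB.eigenvalues with hmu
  set σ := Tuple.sort lam with hσdef
  set τ := Tuple.sort mu with hτdef
  have hσ : Monotone (lam ∘ σ) := Tuple.monotone_sort lam
  have hτ : Monotone (mu ∘ τ) := Tuple.monotone_sort mu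
  have hμ0 : ∀ i, 0 ≤ mu i := hBP.eigenvalues_nonneg
  have hlam0 : ∀ i, 0 ≤ lam i := hRe.eigenvalues_nonneg
  have hfh : ∀ k, lam (σ k) ≤ mu (τ k) :=
    fan_hoffman A hH hB (dot_reM A) σ τ hσ hτ hμ0
  have e1 : matFun f (reM A) = (hH.eigenvectorUnitary : Matrix (Fin n) (Fin n) ℂ) *
      Matrix.diagonal (fun i => (f (lam i) : ℂ)) *
      star (hH.eigenvectorUnitary : Matrix (Fin n) (Fin n) ℂ) := by
    unfold matFun
    rw [dif_pos hH]
  have e2 : matFun f (matAbs A) = (hB.eigenvectorUnitary : Matrix (Fin n) (Fin n) ℂ) *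
      Matrix.diagonal (fun i => (f (mu i) : ℂ)) *
      star (hB.eigenvectorUnitary : Matrix (Fin n) (Fin n) ℂ) := by
    unfold matFun
    rw [dif_pos hB]
  rw [e1, e2]
  rw [N_conj_unitary N hui _ _ (hH.eigenvectorUnitary).2,
    N_conj_unitary N hui _ _ (hB.eigenvectorUnitary).2]
  rw [← N_diag_perm N hui σ (fun i => (f (lam i) : ℂ)),
    ← N_diag_perm N hui τ (fun i => (f (mu i) : ℂ))]
  have key := N_diag_mono N hadd hsmul hui (fun i => f (lam (σ i))) (fun i => f (mu (τ i)))
    (fun i => hf0 _ (hlam0 _))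
    (fun i => concave_nonneg_mono f hf hf0 (hlam0 _) (hfh i))
  exact key
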